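/- Let P and Q be orthogonal projections on a complex Hilbert space H. The range of the Sasaki arrow P ⇒ Q := P^⊥ ∨ (P ∧ Q) equals the set { ψ ∈ H : Pψ = (P ∧ Q)ψ }, where P ∧ Q denotes the orthogonal projection onto ran P ∩ ran Q; in particular this set is a closed linear subspace of H. -/

import Mathlib

variable {H : Type} [NormedAddCommGroup H] [InnerProductSpace ℂ H] [CompleteSpace H]

/-- `P` is an orthogonal projection on `H`: self-adjoint and idempotent. -/
def IsOrthProj (P : H →L[ℂ] H) : Prop := IsSelfAdjoint P ∧ P * P = P

/-- The range of the Sasaki arrow `P ⇒ Q = P^⊥ ∨ (P ∧ Q)`, i.e. the closed linear span of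
`ran (1 - P) ∪ (ran P ∩ ran Q)`, equals `{ψ | Pψ = (P ∧ Q)ψ}`, where `M = P ∧ Q` is the
orthogonal projection onto `ran P ∩ ran Q`; in particular this set is closed. -/
theorem stmt2 (P Q M : H →L[ℂ] H) (hP : IsOrthProj P) (hQ : IsOrthProj Q)
    (hM : IsOrthProj M)
    (hMr : LinearMap.range (M : H →ₗ[ℂ] H) = LinearMap.range (P : H →ₗ[ℂ] H) ⊓
      LinearMap.range (Q : H →ₗ[ℂ] H)) :
    (((LinearMap.range ((1 - P : H →L[ℂ] H) : H →ₗ[ℂ] H) ⊔ (LinearMap.range (P : H →ₗ[ℂ] H) ⊓ LinearMap.range (Q : H →ₗ[ℂ] H))).topologicalClosure :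
        Submodule ℂ H) : Set H) = {ψ : H | P ψ = M ψ} ∧
      IsClosed {ψ : H | P ψ = M ψ} := by
  obtain ⟨hPs, hPi⟩ := hP
  obtain ⟨hMs, hMi⟩ := hM
  have hPM : P * M = M := by
    ext x
    have hx : M x ∈ LinearMap.range (P : H →ₗ[ℂ] H) := by
      have h1 : M x ∈ LinearMap.range (M : H →ₗ[ℂ] H) := ⟨x, rfl⟩
      rw [hMr] at h1; exact h1.1
    obtain ⟨y, hy⟩ := hx
    have : P (P y) = P y := congrFun (congrArg DFunLike.coe hPi) y
    have hy' : P y = M x := hy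
    simpa [ContinuousLinearMap.mul_apply, hy'] using this
  have hMP : M * P = M := by
    have h := congrArg star hPM
    rwa [star_mul, hPs.star_eq, hMs.star_eq] at h
  have happ : ∀ (A B C : H →L[ℂ] H), A * B = C → ∀ x, A (B x) = C x := by
    intro A B C h x
    exact congrFun (congrArg DFunLike.coe h) x
  have hclosed : IsClosed {ψ : H | P ψ = M ψ} := isClosed_eq P.continuous M.continuous
  have hset : ((LinearMap.range ((1 - P : H →L[ℂ] H) : H →ₗ[ℂ] H) ⊔ (LinearMap.range (P : H →ₗ[ℂ] H) ⊓ LinearMap.range (Q : H →ₗ[ℂ] H)) :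
      Submodule ℂ H) : Set H) = {ψ : H | P ψ = M ψ} := by
    ext ψ
    simp only [SetLike.mem_coe, Set.mem_setOf_eq, Submodule.mem_sup]
    constructor
    · rintro ⟨a, ⟨u, rfl⟩, b, hb, rfl⟩
      rw [← hMr] at hb
      obtain ⟨v, rfl⟩ := hb
      have h1 : P (P u) = P u := happ P P P hPi u
      have h2 : M (P u) = M u := happ M P M hMP u
      have h3 : P (M v) = M v := happ P M M hPM v
      have h4 : M (M v) = M v := happ M M M hMi v
      simp [map_add, ContinuousLinearMap.sub_apply, h1, h2, h3, h4]
    · intro hψ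
      refine ⟨(1 - P) ψ, ⟨ψ, rfl⟩, P ψ, ?_, by simp⟩
      rw [← hMr, hψ]
      exact ⟨ψ, rfl⟩
  constructor
  · rw [Submodule.topologicalClosure_coe, hset, hclosed.closure_eq]
  · exact hclosed
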